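/- Let f be a maximum s-t flow of G with unit capacities. Then: (i) for every X ∈ ℛ_st and every arc a = (u,v) ∈ A with f(a) = 1 and v ∈ X, also u ∈ X; and (ii) the set of all minimum s-t cuts of G equals { { a = (u,v) ∈ A : f(a) = 1, u ∈ X, v ∉ X } : X ∈ ℛ_st }. -/

import Mathlib

/-- An `s`-`t` cut: a set `C ⊆ A` of arcs such that the digraph `(V, A \ C)` has no
directed path from `s` to `t`. -/
def IsSTCut {V : Type*} (A : Finset (V × V)) (s t : V) (C : Finset (V × V)) : Prop :=
  C ⊆ A ∧ ¬ Relation.ReflTransGen (fun u v => (u, v) ∈ A ∧ (u, v) ∉ C) s t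

/-- A minimum `s`-`t` cut: an `s`-`t` cut of minimum cardinality. -/
def IsMinSTCut {V : Type*} (A : Finset (V × V)) (s t : V) (C : Finset (V × V)) : Prop :=
  IsSTCut A s t C ∧ ∀ C' : Finset (V × V), IsSTCut A s t C' → C.card ≤ C'.card

/-- `Δ⁺(X)`: the set of arcs from `X` to `V \ X`. -/
def outArcs {V : Type*} [DecidableEq V] (A : Finset (V × V)) (X : Finset V) :
    Finset (V × V) :=
  A.filter fun a => a.1 ∈ X ∧ a.2 ∉ X

/-- `ℛ_st`: the family of `X ⊆ V` with `s ∈ X`, `t ∉ X`, whose outgoing arcs form a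
minimum `s`-`t` cut. -/
def Rst {V : Type*} [DecidableEq V] (A : Finset (V × V)) (s t : V) : Set (Finset V) :=
  {X | s ∈ X ∧ t ∉ X ∧ IsMinSTCut A s t (outArcs A X)}

/-- An `s`-`t` flow with unit capacities. -/
def IsFlow {V : Type*} [DecidableEq V] (A : Finset (V × V)) (s t : V) (f : V × V → ℤ) :
    Prop :=
  (∀ a ∈ A, 0 ≤ f a ∧ f a ≤ 1) ∧
  ∀ v : V, v ≠ s → v ≠ t →
    (∑ a ∈ A.filter fun a => a.1 = v, f a) = ∑ a ∈ A.filter fun a => a.2 = v, f a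

/-- The value of a flow: flow out of `s` minus flow into `s`. -/
def flowValue {V : Type*} [DecidableEq V] (A : Finset (V × V)) (s : V) (f : V × V → ℤ) :
    ℤ :=
  (∑ a ∈ A.filter fun a => a.1 = s, f a) - ∑ a ∈ A.filter fun a => a.2 = s, f a

/-- A maximum `s`-`t` flow. -/
def IsMaxFlow {V : Type*} [DecidableEq V] (A : Finset (V × V)) (s t : V) (f : V × V → ℤ) :
    Prop :=
  IsFlow A s t f ∧ ∀ g : V × V → ℤ, IsFlow A s t g → flowValue A s g ≤ flowValue A s f


section MaxFlowAux

open Relation Finset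

variable {V : Type*} [DecidableEq V]

/-- Net outflow of a function at a vertex. -/
def netF (A : Finset (V × V)) (f : V × V → ℤ) (v : V) : ℤ :=
  (∑ a ∈ A.filter fun a => a.1 = v, f a) - ∑ a ∈ A.filter fun a => a.2 = v, f a

lemma sum_update_eq {α : Type*} [DecidableEq α] (s : Finset α) (g : α → ℤ) (a : α) (x : ℤ) :
    ∑ b ∈ s, Function.update g a x b = (∑ b ∈ s, g b) + (if a ∈ s then x - g a else 0) := by
  split_ifs with h
  · rw [Finset.sum_update_of_mem h, ← Finset.add_sum_erase s g h, Finset.sdiff_singleton_eq_erase]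
    ring
  · rw [Finset.sum_congr rfl fun b hb => Function.update_of_ne (by rintro rfl; exact h hb) x g]
    ring

lemma netF_update (A : Finset (V × V)) (f : V × V → ℤ) (a : V × V) (x : ℤ) (v : V) :
    netF A (Function.update f a x) v =
      netF A f v + (if a ∈ A ∧ a.1 = v then x - f a else 0)
        - (if a ∈ A ∧ a.2 = v then x - f a else 0) := by
  unfold netF
  rw [sum_update_eq, sum_update_eq]
  simp only [Finset.mem_filter]
  ring

lemma exists_nodup_chain {α : Type*} {r : α → α → Prop} {a b : α}
    (h : Relation.ReflTransGen r a b) :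
    ∃ l : List α, List.Chain r a l ∧ (a :: l).getLast (List.cons_ne_nil _ _) = b
      ∧ (a :: l).Nodup := by
  induction h using Relation.ReflTransGen.head_induction_on with
  | refl => exact ⟨[], List.Chain.nil, rfl, List.nodup_singleton b⟩
  | @head a c hac hcb ih =>
    obtain ⟨l, hchain, hlast, hnodup⟩ := ih
    by_cases hmem : a ∈ c :: l
    · obtain ⟨p, q, hpq⟩ := List.append_of_mem hmem
      have hsuf : (a :: q) <:+ (c :: l) := ⟨p, hpq.symm⟩
      have hch0 : List.Chain' r (c :: l) := hchain
      have hch' : List.Chain r a q := List.IsChain.suffix hch0 hsuf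
      have h1 : (c :: l).getLast? = some b := by
        rw [List.getLast?_eq_getLast (List.cons_ne_nil _ _), hlast]
      have h2 : (a :: q).getLast? = some b := by
        rw [hpq, List.getLast?_append_of_ne_nil p (List.cons_ne_nil _ _)] at h1
        exact h1
      rw [List.getLast?_eq_getLast (List.cons_ne_nil _ _)] at h2
      exact ⟨q, hch', Option.some_injective _ h2, hnodup.sublist hsuf.sublist⟩
    · exact ⟨c :: l, List.Chain.cons hac hchain,
        by rwa [List.getLast_cons_cons], hnodup.cons (by simpa using hmem)⟩

/-- Residual relation of a flow. -/
def res (A : Finset (V × V)) (f : V × V → ℤ) (u v : V) : Prop :=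
  ((u, v) ∈ A ∧ f (u, v) = 0) ∨ ((v, u) ∈ A ∧ f (v, u) = 1)

lemma augment_aux (A : Finset (V × V)) (t : V) (f : V × V → ℤ)
    (hcap : ∀ a ∈ A, 0 ≤ f a ∧ f a ≤ 1) :
    ∀ (l : List V) (u : V), List.Chain (res A f) u l →
      (u :: l).getLast (List.cons_ne_nil _ _) = t → (u :: l).Nodup →
      ∃ g : V × V → ℤ, (∀ a ∈ A, 0 ≤ g a ∧ g a ≤ 1) ∧
        (∀ v, v ≠ u → v ≠ t → netF A g v = netF A f v) ∧
        (u ≠ t → netF A g u = netF A f u + 1) ∧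
        (∀ a : V × V, a.1 ∉ (u :: l) ∨ a.2 ∉ (u :: l) → g a = f a) := by
  intro l
  induction l with
  | nil =>
    intro u _ hlast _
    refine ⟨f, hcap, fun _ _ _ => rfl, fun hut => absurd ?_ hut, fun _ _ => rfl⟩
    simpa using hlast
  | cons c l ih =>
    intro u hchain hlast hnodup
    rw [List.Chain, List.chain_cons] at hchain
    rw [List.getLast_cons_cons] at hlast
    rw [List.nodup_cons] at hnodup
    obtain ⟨hu, hnd⟩ := hnodup
    have hut : u ≠ t := fun h => hu (h ▸ hlast ▸ List.getLast_mem (List.cons_ne_nil _ _))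
    have huc : u ≠ c := fun h => hu (h ▸ (List.mem_cons_self : c ∈ c :: l))
    obtain ⟨g, hgcap, hg2, hg3, hg4⟩ := ih c hchain.2 hlast hnd
    rcases hchain.1 with ⟨h1, h2⟩ | ⟨h1, h2⟩
    · -- forward arc (u, c)
      have hga : g (u, c) = f (u, c) := hg4 (u, c) (Or.inl hu)
      refine ⟨Function.update g (u, c) 1, ?_, ?_, ?_, ?_⟩
      · intro a ha
        by_cases hau : a = (u, c)
        · subst hau; simp
        · rw [Function.update_of_ne hau]; exact hgcap a ha
      · intro v hvu hvt
        rw [netF_update]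
        by_cases hvc : v = c
        · subst hvc
          rw [if_neg (fun h => hvu h.2.symm), if_pos ⟨h1, rfl⟩, hg3 hvt, hga, h2]
          ring
        · rw [if_neg (fun h => hvu h.2.symm), if_neg (fun h => hvc h.2.symm),
            hg2 v hvc hvt]
          ring
      · intro _
        rw [netF_update, if_pos ⟨h1, rfl⟩, if_neg (fun h => huc h.2.symm),
          hg2 u huc hut, hga, h2]
        ring
      · intro a haout
        have hne : a ≠ (u, c) := by
          rintro rfl
          rcases haout with h | h
          · exact h (List.mem_cons_self)
          · exact h (List.mem_cons_of_mem _ (List.mem_cons_self))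
        rw [Function.update_of_ne hne]
        apply hg4
        rcases haout with h | h
        · exact Or.inl fun h' => h (List.mem_cons_of_mem _ h')
        · exact Or.inr fun h' => h (List.mem_cons_of_mem _ h')
    · -- backward arc (c, u)
      have hga : g (c, u) = f (c, u) := hg4 (c, u) (Or.inr hu)
      refine ⟨Function.update g (c, u) 0, ?_, ?_, ?_, ?_⟩
      · intro a ha
        by_cases hau : a = (c, u)
        · subst hau; simp
        · rw [Function.update_of_ne hau]; exact hgcap a ha
      · intro v hvu hvt
        rw [netF_update]
        by_cases hvc : v = c
        · subst hvc
          rw [if_pos ⟨h1, rfl⟩, if_neg (fun h => hvu h.2.symm), hg3 hvt, hga, h2]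
          ring
        · rw [if_neg (fun h => hvc h.2.symm), if_neg (fun h => hvu h.2.symm),
            hg2 v hvc hvt]
          ring
      · intro _
        rw [netF_update, if_neg (fun h => huc h.2.symm), if_pos ⟨h1, rfl⟩,
          hg2 u huc hut, hga, h2]
        ring
      · intro a haout
        have hne : a ≠ (c, u) := by
          rintro rfl
          rcases haout with h | h
          · exact h (List.mem_cons_of_mem _ (List.mem_cons_self))
          · exact h (List.mem_cons_self)
        rw [Function.update_of_ne hne]
        apply hg4
        rcases haout with h | h
        · exact Or.inl fun h' => h (List.mem_cons_of_mem _ h')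
        · exact Or.inr fun h' => h (List.mem_cons_of_mem _ h')

lemma flow_across (A : Finset (V × V)) (s t : V) (f : V × V → ℤ) (hf : IsFlow A s t f)
    (X : Finset V) (hs : s ∈ X) (ht : t ∉ X) :
    flowValue A s f = (∑ a ∈ A.filter fun a => a.1 ∈ X ∧ a.2 ∉ X, f a)
      - ∑ a ∈ A.filter fun a => a.1 ∉ X ∧ a.2 ∈ X, f a := by
  have key : ∀ c : (V × V) → V, (∑ v ∈ X, ∑ a ∈ A.filter fun a => c a = v, f a)
      = ∑ a ∈ A, if c a ∈ X then f a else 0 := by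
    intro c
    simp_rw [Finset.sum_filter]
    rw [Finset.sum_comm]
    refine Finset.sum_congr rfl fun a _ => ?_
    exact Finset.sum_ite_eq X (c a) (fun _ => f a)
  have h1 : flowValue A s f = ∑ v ∈ X,
      ((∑ a ∈ A.filter fun a => a.1 = v, f a) - ∑ a ∈ A.filter fun a => a.2 = v, f a) := by
    rw [Finset.sum_eq_single_of_mem s hs]
    · rfl
    · intro v hv hvs
      rw [hf.2 v hvs (fun h => ht (h ▸ hv))]
      ring
  rw [h1, Finset.sum_sub_distrib, key Prod.fst, key Prod.snd]
  rw [Finset.sum_filter, Finset.sum_filter, ← Finset.sum_sub_distrib, ← Finset.sum_sub_distrib]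
  refine Finset.sum_congr rfl fun a _ => ?_
  by_cases h1 : a.1 ∈ X <;> by_cases h2 : a.2 ∈ X <;> simp [h1, h2]

lemma weak_duality [Fintype V] (A : Finset (V × V)) (s t : V) (f : V × V → ℤ)
    (hf : IsFlow A s t f) (C : Finset (V × V)) (hC : IsSTCut A s t C) :
    flowValue A s f ≤ C.card := by
  classical
  set r : V → V → Prop := fun u w => (u, w) ∈ A ∧ (u, w) ∉ C with hr
  set Y : Finset V := Finset.univ.filter fun v => Relation.ReflTransGen r s v with hY
  have hmemY : ∀ v, v ∈ Y ↔ Relation.ReflTransGen r s v := by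
    intro v; simp [hY]
  have hsY : s ∈ Y := (hmemY s).mpr Relation.ReflTransGen.refl
  have htY : t ∉ Y := fun h => hC.2 ((hmemY t).mp h)
  have hsub : (A.filter fun a => a.1 ∈ Y ∧ a.2 ∉ Y) ⊆ C := by
    intro a ha
    rw [Finset.mem_filter] at ha
    obtain ⟨haA, h1, h2⟩ := ha
    by_contra hC'
    exact h2 ((hmemY a.2).mpr (((hmemY a.1).mp h1).tail ⟨by simpa using haA, by simpa using hC'⟩))
  rw [flow_across A s t f hf Y hsY htY]
  have hub : (∑ a ∈ A.filter fun a => a.1 ∈ Y ∧ a.2 ∉ Y, f a) ≤ C.card := by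
    calc (∑ a ∈ A.filter fun a => a.1 ∈ Y ∧ a.2 ∉ Y, f a)
        ≤ ∑ _a ∈ A.filter fun a => a.1 ∈ Y ∧ a.2 ∉ Y, (1 : ℤ) :=
          Finset.sum_le_sum fun a ha => (hf.1 a (Finset.filter_subset _ _ ha)).2
      _ = (A.filter fun a => a.1 ∈ Y ∧ a.2 ∉ Y).card := by simp
      _ ≤ C.card := by exact_mod_cast Nat.cast_le.mpr (Finset.card_le_card hsub)
  have hlb : (0 : ℤ) ≤ ∑ a ∈ A.filter fun a => a.1 ∉ Y ∧ a.2 ∈ Y, f a :=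
    Finset.sum_nonneg fun a ha => (hf.1 a (Finset.filter_subset _ _ ha)).1
  omega

lemma outArcs_cut (A : Finset (V × V)) (s t : V) (X : Finset V) (hs : s ∈ X) (ht : t ∉ X) :
    IsSTCut A s t (outArcs A X) := by
  refine ⟨Finset.filter_subset _ _, fun hpath => ?_⟩
  have hstay : ∀ v, Relation.ReflTransGen
      (fun u v => (u, v) ∈ A ∧ (u, v) ∉ outArcs A X) s v → v ∈ X := by
    intro v h
    induction h with
    | refl => exact hs
    | tail _ h2 ih =>
      by_contra hc
      exact h2.2 (Finset.mem_filter.mpr ⟨h2.1, ih, hc⟩)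
  exact ht (hstay t hpath)

lemma no_augmenting (A : Finset (V × V)) (s t : V) (hst : s ≠ t) (f : V × V → ℤ)
    (hf : IsMaxFlow A s t f) : ¬ Relation.ReflTransGen (res A f) s t := by
  intro h
  obtain ⟨l, hchain, hlast, hnodup⟩ := exists_nodup_chain h
  obtain ⟨g, hgcap, hg2, hg3, _⟩ := augment_aux A t f hf.1.1 l s hchain hlast hnodup
  have hgflow : IsFlow A s t g := by
    refine ⟨hgcap, fun v hvs hvt => ?_⟩
    have h1 := hg2 v hvs hvt
    have h2 := hf.1.2 v hvs hvt
    unfold netF at h1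
    omega
  have hle := hf.2 g hgflow
  have hval : flowValue A s g = flowValue A s f + 1 := hg3 hst
  omega

lemma exists_good_cut [Fintype V] (A : Finset (V × V)) (s t : V) (hst : s ≠ t)
    (f : V × V → ℤ) (hf : IsMaxFlow A s t f) :
    ∃ X : Finset V, s ∈ X ∧ t ∉ X ∧ IsMinSTCut A s t (outArcs A X) ∧
      flowValue A s f = (outArcs A X).card := by
  classical
  set X : Finset V := Finset.univ.filter fun v => Relation.ReflTransGen (res A f) s v with hX
  have hmem : ∀ v, v ∈ X ↔ Relation.ReflTransGen (res A f) s v := by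
    intro v; simp [hX]
  have hs : s ∈ X := (hmem s).mpr Relation.ReflTransGen.refl
  have ht : t ∉ X := fun h => no_augmenting A s t hst f hf ((hmem t).mp h)
  have hzo : ∀ a ∈ A, f a = 0 ∨ f a = 1 := by
    intro a ha
    have := hf.1.1 a ha
    omega
  have hout : ∀ a ∈ A, a.1 ∈ X → a.2 ∉ X → f a = 1 := by
    intro a ha h1 h2
    rcases hzo a ha with h0 | h0
    · exact absurd ((hmem _).mpr (((hmem _).mp h1).tail
        (Or.inl ⟨by simpa using ha, by simpa using h0⟩))) h2
    · exact h0
  have hin : ∀ a ∈ A, a.1 ∉ X → a.2 ∈ X → f a = 0 := by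
    intro a ha h1 h2
    rcases hzo a ha with h0 | h0
    · exact h0
    · exact absurd ((hmem _).mpr (((hmem _).mp h2).tail
        (Or.inr ⟨by simpa using ha, by simpa using h0⟩))) h1
  have hval : flowValue A s f = (outArcs A X).card := by
    rw [flow_across A s t f hf.1 X hs ht]
    have e1 : (∑ a ∈ A.filter fun a => a.1 ∈ X ∧ a.2 ∉ X, f a)
        = ((outArcs A X).card : ℤ) := by
      rw [Finset.sum_congr rfl fun a ha => hout a (Finset.filter_subset _ _ ha)
        (Finset.mem_filter.mp ha).2.1 (Finset.mem_filter.mp ha).2.2]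
      simp [outArcs]
    have e2 : (∑ a ∈ A.filter fun a => a.1 ∉ X ∧ a.2 ∈ X, f a) = 0 :=
      Finset.sum_eq_zero fun a ha => hin a (Finset.filter_subset _ _ ha)
        (Finset.mem_filter.mp ha).2.1 (Finset.mem_filter.mp ha).2.2
    rw [e1, e2]
    ring
  have hcut : IsSTCut A s t (outArcs A X) := outArcs_cut A s t X hs ht
  refine ⟨X, hs, ht, ⟨hcut, fun C' hC' => ?_⟩, hval⟩
  have := weak_duality A s t f hf.1 C' hC'
  rw [hval] at this
  exact_mod_cast this

lemma rst_saturated [Fintype V] (A : Finset (V × V)) (s t : V) (hst : s ≠ t)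
    (f : V × V → ℤ) (hf : IsMaxFlow A s t f) (X : Finset V) (hX : X ∈ Rst A s t) :
    (∀ a ∈ A, a.1 ∈ X → a.2 ∉ X → f a = 1) ∧ (∀ a ∈ A, a.1 ∉ X → a.2 ∈ X → f a = 0) := by
  obtain ⟨X', _, _, hmin', hval⟩ := exists_good_cut A s t hst f hf
  obtain ⟨hsX, htX, hminX⟩ := hX
  have hcards : (outArcs A X).card = (outArcs A X').card :=
    le_antisymm (hminX.2 _ hmin'.1) (hmin'.2 _ hminX.1)
  have hval2 : flowValue A s f = ((outArcs A X).card : ℤ) := by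
    rw [hval, hcards]
  have hfa := flow_across A s t f hf.1 X hsX htX
  have hub : (∑ a ∈ A.filter fun a => a.1 ∈ X ∧ a.2 ∉ X, f a) ≤ ((outArcs A X).card : ℤ) := by
    calc (∑ a ∈ A.filter fun a => a.1 ∈ X ∧ a.2 ∉ X, f a)
        ≤ ∑ _a ∈ A.filter fun a => a.1 ∈ X ∧ a.2 ∉ X, (1 : ℤ) :=
          Finset.sum_le_sum fun a ha => (hf.1.1 a (Finset.filter_subset _ _ ha)).2
      _ = ((outArcs A X).card : ℤ) := by simp [outArcs]
  have hlb : (0 : ℤ) ≤ ∑ a ∈ A.filter fun a => a.1 ∉ X ∧ a.2 ∈ X, f a :=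
    Finset.sum_nonneg fun a ha => (hf.1.1 a (Finset.filter_subset _ _ ha)).1
  have hsum_out : (∑ a ∈ A.filter fun a => a.1 ∈ X ∧ a.2 ∉ X, f a)
      = ((outArcs A X).card : ℤ) := by omega
  have hsum_in : (∑ a ∈ A.filter fun a => a.1 ∉ X ∧ a.2 ∈ X, f a) = 0 := by omega
  constructor
  · intro a ha h1 h2
    have hzero : ∑ a ∈ A.filter (fun a => a.1 ∈ X ∧ a.2 ∉ X), (1 - f a) = 0 := by
      rw [Finset.sum_sub_distrib, hsum_out]
      simp [outArcs]
    have := (Finset.sum_eq_zero_iff_of_nonneg fun b hb => by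
      have := (hf.1.1 b (Finset.filter_subset _ _ hb)).2
      omega).mp hzero a (Finset.mem_filter.mpr ⟨ha, h1, h2⟩)
    omega
  · intro a ha h1 h2
    exact (Finset.sum_eq_zero_iff_of_nonneg fun b hb =>
      (hf.1.1 b (Finset.filter_subset _ _ hb)).1).mp hsum_in a
      (Finset.mem_filter.mpr ⟨ha, h1, h2⟩)

end MaxFlowAux

/-- Let `f` be a maximum `s`-`t` flow of `G` with unit capacities. Then
(i) for every `X ∈ ℛ_st` and every arc `a = (u,v) ∈ A` with `f(a) = 1` and `v ∈ X`, also
`u ∈ X`; and (ii) the set of all minimum `s`-`t` cuts of `G` equals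
`{ { a = (u,v) ∈ A : f(a) = 1, u ∈ X, v ∉ X } : X ∈ ℛ_st }`. -/
theorem stmt_12 {V : Type*} [Fintype V] [DecidableEq V]
    (A : Finset (V × V)) (s t : V) (hst : s ≠ t)
    (f : V × V → ℤ) (hf : IsMaxFlow A s t f) :
    (∀ X ∈ Rst A s t, ∀ a ∈ A, f a = 1 → a.2 ∈ X → a.1 ∈ X) ∧
    {C : Finset (V × V) | IsMinSTCut A s t C} =
      {C : Finset (V × V) | ∃ X ∈ Rst A s t,
        C = A.filter fun a => f a = 1 ∧ a.1 ∈ X ∧ a.2 ∉ X} := by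
  -- proof
  classical
  have filter_eq : ∀ X ∈ Rst A s t,
      (A.filter fun a => f a = 1 ∧ a.1 ∈ X ∧ a.2 ∉ X) = outArcs A X := by
    intro X hX
    ext a
    simp only [outArcs, Finset.mem_filter]
    constructor
    · rintro ⟨ha, _, h1, h2⟩
      exact ⟨ha, h1, h2⟩
    · rintro ⟨ha, h1, h2⟩
      exact ⟨ha, (rst_saturated A s t hst f hf X hX).1 a ha h1 h2, h1, h2⟩
  constructor
  · intro X hX a ha hfa1 h2
    by_contra h1
    have := (rst_saturated A s t hst f hf X hX).2 a ha h1 h2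
    omega
  · ext C
    simp only [Set.mem_setOf_eq]
    constructor
    · intro hC
      set r : V → V → Prop := fun u w => (u, w) ∈ A ∧ (u, w) ∉ C with hr
      set Y : Finset V := Finset.univ.filter fun v => Relation.ReflTransGen r s v with hY
      have hmemY : ∀ v, v ∈ Y ↔ Relation.ReflTransGen r s v := by
        intro v; simp [hY]
      have hsY : s ∈ Y := (hmemY s).mpr Relation.ReflTransGen.refl
      have htY : t ∉ Y := fun h => hC.1.2 ((hmemY t).mp h)
      have hsub : outArcs A Y ⊆ C := by
        intro a ha
        rw [outArcs, Finset.mem_filter] at ha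
        obtain ⟨haA, h1, h2⟩ := ha
        by_contra hC'
        exact h2 ((hmemY a.2).mpr (((hmemY a.1).mp h1).tail
          ⟨by simpa using haA, by simpa using hC'⟩))
      have hcut : IsSTCut A s t (outArcs A Y) := outArcs_cut A s t Y hsY htY
      have hle : C.card ≤ (outArcs A Y).card := hC.2 _ hcut
      have heq : outArcs A Y = C := Finset.eq_of_subset_of_card_le hsub hle
      have hYmem : Y ∈ Rst A s t := ⟨hsY, htY, heq ▸ hC⟩
      refine ⟨Y, hYmem, ?_⟩
      rw [← heq, filter_eq Y hYmem]
    · rintro ⟨X, hX, rfl⟩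
      rw [filter_eq X hX]
      exact hX.2.2
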